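/- Let λ, ε ∈ ℝ and let s, u, t, v, x, y ∈ ℂ be nonzero with 0<|ux|≤q², 0<|u/x|≤q², 0<|vy|≤q², 0<|v/y|≤q², 0<|s/u|≤q, 0<|t/v|≤q. Then Φ_{s,u,t,v,λ,ε}(x,y) = conj( Φ_{t̄,v̄,s̄,ū,λ,−ε}(ȳ, x̄) ), where bars denote complex conjugation (the parameters (t̄,v̄,s̄,ū,ȳ,x̄) satisfy the same conditions, so the right-hand side is defined). -/

import Mathlib

noncomputable section

open Complex ComplexConjugate

/-- `q^{iλ} := exp(iλ · log q)`. -/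
def qil (q lam : ℝ) : ℂ := Complex.exp (Complex.I * lam * Real.log q)

/-- the real power `q^a` viewed as a complex number. -/
def qr (q a : ℝ) : ℂ := ((q ^ a : ℝ) : ℂ)

/-- the infinite `q`-shifted factorial `(w;p)_∞ = ∏_{j≥0} (1 - w p^j)`. -/
def qPoch (w p : ℂ) : ℂ := ∏' j : ℕ, (1 - w * p ^ j)

/-- the theta function `θ(w;p) = (w;p)_∞ (p/w;p)_∞`. -/
def qTheta (w p : ℂ) : ℂ := qPoch w p * qPoch (p / w) p

/-- `μ_s = (s + s⁻¹)/(q⁻¹ - q)`. -/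
def mu (q : ℝ) (s : ℂ) : ℂ := (s + s⁻¹) / ((q : ℂ)⁻¹ - (q : ℂ))

/-- The eigenfunction
`f_{x,s,u,λ,ε}(z) = (sq^{1−2iλ}x^{±1}, uszq^{1+iλ};q²)_∞ θ(q^{2ε−iλ}uz/s;q²) /
(uzq^{−iλ}x^{±1}, sq^{1−iλ}/(uz);q²)_∞`. -/
def fAW (q lam eps : ℝ) (x s u : ℂ) (z : ℂ) : ℂ :=
  (qPoch (s * (q : ℂ) * ((qil q lam)⁻¹) ^ 2 * x) ((q : ℂ) ^ 2) *
    qPoch (s * (q : ℂ) * ((qil q lam)⁻¹) ^ 2 / x) ((q : ℂ) ^ 2) *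
    qPoch (u * s * z * (q : ℂ) * qil q lam) ((q : ℂ) ^ 2) *
    qTheta (qr q (2 * eps) * (qil q lam)⁻¹ * u * z / s) ((q : ℂ) ^ 2)) /
  (qPoch (u * z * (qil q lam)⁻¹ * x) ((q : ℂ) ^ 2) *
    qPoch (u * z * (qil q lam)⁻¹ / x) ((q : ℂ) ^ 2) *
    qPoch (s * (q : ℂ) * (qil q lam)⁻¹ / (u * z)) ((q : ℂ) ^ 2))

/-- the denominator of `f_{x,s,u,λ,ε}` at the point `z`. -/
def fDen (q lam : ℝ) (x s u : ℂ) (z : ℂ) : ℂ :=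
  qPoch (u * z * (qil q lam)⁻¹ * x) ((q : ℂ) ^ 2) *
    qPoch (u * z * (qil q lam)⁻¹ / x) ((q : ℂ) ^ 2) *
    qPoch (s * (q : ℂ) * (qil q lam)⁻¹ / (u * z)) ((q : ℂ) ^ 2)

/-- the integrand of the overlap coefficient `Φ` (without the prefactor). -/
def PhiIntegrand (q lam eps : ℝ) (s u t v x y : ℂ) (z : ℂ) : ℂ :=
  (qPoch (u * s * z * (q : ℂ) * qil q lam) ((q : ℂ) ^ 2) *
    qPoch (t * v * z * (q : ℂ) * (qil q lam)⁻¹) ((q : ℂ) ^ 2) *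
    qTheta (u * z * qr q (2 * eps) * (qil q lam)⁻¹ / s) ((q : ℂ) ^ 2) *
    qTheta (v * z * qr q (-(2 * eps)) * qil q lam / t) ((q : ℂ) ^ 2)) /
  (qPoch (u * z * (qil q lam)⁻¹ * x) ((q : ℂ) ^ 2) *
    qPoch (u * z * (qil q lam)⁻¹ / x) ((q : ℂ) ^ 2) *
    qPoch (s * (q : ℂ) * (qil q lam)⁻¹ / (u * z)) ((q : ℂ) ^ 2) *
    qPoch (v * z * qil q lam * y) ((q : ℂ) ^ 2) *
    qPoch (v * z * qil q lam / y) ((q : ℂ) ^ 2) *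
    qPoch (t * (q : ℂ) * qil q lam / (v * z)) ((q : ℂ) ^ 2))

/-- the overlap coefficient
`Φ_{s,u,t,v,λ,ε}(x,y) = (sq^{1−2iλ}x^{±1}, tq^{1+2iλ}y^{±1};q²)_∞ · (2πi)⁻¹ ∮_{|z|=1} ⋯ dz/z`. -/
def PhiAW (q lam eps : ℝ) (s u t v x y : ℂ) : ℂ :=
  (qPoch (s * (q : ℂ) * ((qil q lam)⁻¹) ^ 2 * x) ((q : ℂ) ^ 2) *
    qPoch (s * (q : ℂ) * ((qil q lam)⁻¹) ^ 2 / x) ((q : ℂ) ^ 2) *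
    qPoch (t * (q : ℂ) * (qil q lam) ^ 2 * y) ((q : ℂ) ^ 2) *
    qPoch (t * (q : ℂ) * (qil q lam) ^ 2 / y) ((q : ℂ) ^ 2)) *
  ((2 * (Real.pi : ℂ) * Complex.I)⁻¹ *
    ∮ z in C(0, (1 : ℝ)), PhiIntegrand q lam eps s u t v x y z / z)

/- ### Auxiliary lemmas -/

lemma conj_tprod' (f : ℕ → ℂ) : conj (∏' j, f j) = ∏' j, conj (f j) := by
  by_cases hf : Multipliable f
  · exact hf.map_tprod (starRingEnd ℂ).toMonoidHom continuous_conj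
  · rw [tprod_eq_one_of_not_multipliable hf, tprod_eq_one_of_not_multipliable, map_one]
    intro h
    apply hf
    have := h.map (starRingEnd ℂ).toMonoidHom continuous_conj
    simpa [Function.comp_def] using this

lemma conj_qPoch (w p : ℂ) : conj (qPoch w p) = qPoch (conj w) (conj p) := by
  rw [qPoch, conj_tprod']
  simp [qPoch]

lemma conj_qTheta (w p : ℂ) : conj (qTheta w p) = qTheta (conj w) (conj p) := by
  simp [qTheta, map_mul, conj_qPoch, map_div₀]

lemma conj_qil (q lam : ℝ) : conj (qil q lam) = (qil q lam)⁻¹ := by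
  rw [qil, ← Complex.exp_conj, ← Complex.exp_neg]
  congr 1
  simp [map_mul, Complex.conj_I]

lemma conj_qil_inv (q lam : ℝ) : conj ((qil q lam)⁻¹) = qil q lam := by
  rw [map_inv₀, conj_qil, inv_inv]

lemma conj_qr (q a : ℝ) : conj (qr q a) = qr q a := Complex.conj_ofReal _

lemma intervalIntegral_conj' {f : ℝ → ℂ} {a b : ℝ} :
    (∫ x in a..b, conj (f x)) = conj (∫ x in a..b, f x) := by
  simp [intervalIntegral, ← integral_conj, map_sub]

lemma circleInt_div (H : ℂ → ℂ) :
    (∮ z in C(0, (1:ℝ)), H z / z)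
      = ∫ θ in (0:ℝ)..2 * Real.pi, Complex.I * H (circleMap 0 1 θ) := by
  rw [circleIntegral]
  refine intervalIntegral.integral_congr fun θ _ => ?_
  have h0 : circleMap 0 1 θ ≠ 0 := by
    simpa using circleMap_ne_center (c := 0) (R := 1) one_ne_zero (θ := θ)
  rw [deriv_circleMap, smul_eq_mul]
  field_simp

lemma conj_circleMap' (θ : ℝ) : conj (circleMap 0 1 θ) = circleMap 0 1 (-θ) := by
  simp [circleMap, ← Complex.exp_conj]

lemma conj_circleInt (F G : ℂ → ℂ) (h : ∀ z, conj (G z) = F (conj z)) :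
    conj (∮ z in C(0, (1:ℝ)), G z / z) = -(∮ z in C(0, (1:ℝ)), F z / z) := by
  rw [circleInt_div, circleInt_div, ← intervalIntegral_conj']
  have key : ∀ θ : ℝ, conj (Complex.I * G (circleMap 0 1 θ))
      = -(Complex.I * F (circleMap 0 1 (2 * Real.pi - θ))) := by
    intro θ
    have hper : circleMap 0 1 (2 * Real.pi - θ) = circleMap 0 1 (-θ) := by
      have := periodic_circleMap 0 1 (-θ)
      simpa [sub_eq_neg_add, add_comm] using this
    rw [hper, map_mul, Complex.conj_I, h, conj_circleMap']
    ring
  rw [intervalIntegral.integral_congr fun θ _ => key θ]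
  rw [intervalIntegral.integral_neg]
  congr 1
  have := intervalIntegral.integral_comp_sub_left
    (fun θ => Complex.I * F (circleMap 0 1 θ)) (2 * Real.pi) (a := 0) (b := 2 * Real.pi)
  simpa using this

lemma key_integrand (q lam eps : ℝ) (s u t v x y z : ℂ) :
    conj (PhiIntegrand q lam (-eps) (conj t) (conj v) (conj s) (conj u) (conj y) (conj x) z)
      = PhiIntegrand q lam eps s u t v x y (conj z) := by
  have h2 : (2 : ℝ) * -eps = -(2 * eps) := by ring
  have h2' : -((2:ℝ) * -eps) = 2 * eps := by ring
  simp only [PhiIntegrand, h2, h2', map_div₀, map_mul, conj_qPoch, conj_qTheta, map_inv₀,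
    conj_qil, conj_qil_inv, conj_qr, map_pow, Complex.conj_ofReal, Complex.conj_conj, inv_inv]
  ring_nf

/-- The symmetry `Φ_α(x,y) = conj(Φ_{ᾱ^ϑ}(ȳ,x̄))` of the overlap coefficient. -/
theorem stmt9 (q : ℝ) (hq0 : 0 < q) (hq1 : q < 1) (lam eps : ℝ) (s u t v x y : ℂ)
    (hs : s ≠ 0) (hu : u ≠ 0) (ht : t ≠ 0) (hv : v ≠ 0) (hx : x ≠ 0) (hy : y ≠ 0)
    (h1 : ‖u * x‖ ≤ q ^ 2) (h2 : ‖u / x‖ ≤ q ^ 2)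
    (h3 : ‖v * y‖ ≤ q ^ 2) (h4 : ‖v / y‖ ≤ q ^ 2)
    (h5 : ‖s / u‖ ≤ q) (h6 : ‖t / v‖ ≤ q) :
    PhiAW q lam eps s u t v x y
      = conj (PhiAW q lam (-eps) (conj t) (conj v) (conj s) (conj u) (conj y) (conj x)) := by
  have hc := conj_circleInt (PhiIntegrand q lam eps s u t v x y)
    (PhiIntegrand q lam (-eps) (conj t) (conj v) (conj s) (conj u) (conj y) (conj x))
    (key_integrand q lam eps s u t v x y)
  rw [PhiAW, PhiAW]
  simp only [map_mul, map_inv₀, conj_qPoch, map_pow, conj_qil, conj_qil_inv,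
    Complex.conj_conj, Complex.conj_ofReal, Complex.conj_I, map_ofNat, inv_inv, map_div₀]
  rw [hc]
  ring

end
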